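/- Let A be an 𝒪_K-torsion-free algebra over a valuation ring 𝒪_K of a non-archimedean field, and let ϖ', ϖ'' be nonzero elements of the maximal ideal with ϖ = ϖ'·ϖ''. If Spec(A/ϖ'A) and Spec(A/ϖ''A) both satisfy the condition (S₁') — every element killed by a non-minimal-prime-avoiding element is zero — then so does Spec(A/ϖA). -/
import Mathlib


/-- Condition (S₁') for an affine scheme `Spec R`: every element of `R` killed by an
element avoiding all minimal primes is zero. -/
def SOnePrime (R : Type*) [CommRing R] : Prop :=
  ∀ g : R, (∀ p ∈ minimalPrimes R, g ∉ p) → ∀ f : R, g * f = 0 → f = 0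

/-- Ideal-level reformulation of `SOnePrime` of the quotient. -/
def SIdeal {A : Type*} [CommRing A] (I : Ideal A) : Prop :=
  ∀ G : A, (∀ P ∈ I.minimalPrimes, G ∉ P) → ∀ F : A, G * F ∈ I → F ∈ I

lemma sOnePrime_iff_sIdeal {A : Type*} [CommRing A] (I : Ideal A) :
    SOnePrime (A ⧸ I) ↔ SIdeal I := by
  constructor
  · intro h G hG F hGF
    have hmkG : ∀ p ∈ minimalPrimes (A ⧸ I), Ideal.Quotient.mk I G ∉ p := by
      intro p hp hmem
      have hcomap : p.comap (Ideal.Quotient.mk I) ∈ I.minimalPrimes := by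
        rw [Ideal.minimalPrimes_eq_comap]
        exact ⟨p, hp, rfl⟩
      exact hG _ hcomap hmem
    have := h (Ideal.Quotient.mk I G) hmkG (Ideal.Quotient.mk I F)
      (by rw [← map_mul, Ideal.Quotient.eq_zero_iff_mem]; exact hGF)
    rwa [Ideal.Quotient.eq_zero_iff_mem] at this
  · intro h g hg f hgf
    obtain ⟨G, rfl⟩ := Ideal.Quotient.mk_surjective g
    obtain ⟨F, rfl⟩ := Ideal.Quotient.mk_surjective f
    have hGavoid : ∀ P ∈ I.minimalPrimes, G ∉ P := by
      intro P hP
      rw [Ideal.minimalPrimes_eq_comap] at hP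
      obtain ⟨p, hp, rfl⟩ := hP
      exact fun hmem => hg p hp hmem
    have : G * F ∈ I := by
      rw [← Ideal.Quotient.eq_zero_iff_mem, map_mul]; exact hgf
    rw [Ideal.Quotient.eq_zero_iff_mem]
    exact h G hGavoid F this

/-- The key step: if `b = a * c` (so `a ∣ b`) and `S₁'` holds for `A/bA`, then it holds
for `A/abA`, assuming `A` is `O`-torsion-free. -/
lemma sIdeal_mul {O A : Type*} [CommRing O] [IsDomain O]
    [CommRing A] [Algebra O A]
    (htf : ∀ c : O, c ≠ 0 → ∀ a : A, c • a = 0 → a = 0)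
    (a c : O) (ha : a ≠ 0) (hc : c ≠ 0)
    (h : SIdeal (Ideal.span {algebraMap O A (a * c)})) :
    SIdeal (Ideal.span {algebraMap O A (a * (a * c))}) := by
  set b : O := a * c with hb
  have hb0 : b ≠ 0 := mul_ne_zero ha hc
  set α := algebraMap O A with hα
  intro G hG F hGF
  have hle : Ideal.span {α (a * b)} ≤ Ideal.span {α b} := by
    rw [Ideal.span_singleton_le_span_singleton]
    exact ⟨α a, by rw [map_mul, mul_comm]⟩
  -- avoidance transfer: G avoids all minimal primes over (b)
  have hG'' : ∀ P ∈ (Ideal.span {α b}).minimalPrimes, G ∉ P := by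
    intro P hP
    have hPprime : P.IsPrime := hP.1.1
    obtain ⟨q, hq, hqP⟩ := Ideal.exists_minimalPrimes_le (hle.trans hP.1.2)
    have hqprime : q.IsPrime := hq.1.1
    have hab_mem : α (a * b) ∈ q := hq.1.2 (Ideal.subset_span rfl)
    have hbq : α b ∈ q := by
      rw [map_mul] at hab_mem
      rcases hqprime.mem_or_mem hab_mem with h1 | h1
      · have : α b = α a * α c := by rw [hb, map_mul]
        rw [this]
        exact q.mul_mem_right _ h1
      · exact h1
    have hspan : Ideal.span {α b} ≤ q :=
      Ideal.span_le.mpr (Set.singleton_subset_iff.mpr hbq)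
    have hPq : P ≤ q := hP.2 ⟨hqprime, hspan⟩ hqP
    exact fun hmem => hG q hq (hPq hmem)
  -- Step 1: F ∈ bA
  obtain ⟨H, hH⟩ := Ideal.mem_span_singleton.mp (h G hG'' F (hle hGF))
  -- Step 2: G * H ∈ aA
  obtain ⟨t, ht⟩ := Ideal.mem_span_singleton.mp hGF
  have key : b • (G * H - α a * t) = 0 := by
    have : α b * (G * H - α a * t) = 0 := by
      have e1 : α b * (G * H) = G * F := by rw [hH]; ring
      have e2 : α b * (α a * t) = G * F := by
        rw [ht]; simp only [map_mul]; ring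
      rw [mul_sub, e1, e2, sub_self]
    rwa [Algebra.smul_def]
  have hGH : G * H = α a * t := by
    exact sub_eq_zero.mp (htf b hb0 _ key)
  -- Step 3: c • H ∈ bA
  have hcH : G * (α c * H) ∈ Ideal.span {α b} := by
    rw [Ideal.mem_span_singleton]
    refine ⟨t, ?_⟩
    have : α b = α a * α c := by rw [hb, map_mul]
    rw [this]
    calc G * (α c * H) = α c * (G * H) := by ring
      _ = α c * (α a * t) := by rw [hGH]
      _ = α a * α c * t := by ring
  obtain ⟨e, he⟩ := Ideal.mem_span_singleton.mp (h G hG'' _ hcH)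
  have key2 : c • (H - α a * e) = 0 := by
    have : α c * (H - α a * e) = 0 := by
      have e2 : α c * (α a * e) = α b * e := by rw [hb, map_mul]; ring
      rw [mul_sub, e2, ← he]
      ring
    rwa [Algebra.smul_def]
  have hHae : H = α a * e := by
    exact sub_eq_zero.mp (htf c hc _ key2)
  -- Step 4: conclude
  rw [Ideal.mem_span_singleton]
  exact ⟨e, by rw [hH, hHae]; simp only [map_mul]; ring⟩

theorem stmt_11 {O A : Type*} [CommRing O] [IsDomain O] [ValuationRing O]
    [CommRing A] [Algebra O A]
    (htf : ∀ c : O, c ≠ 0 → ∀ a : A, c • a = 0 → a = 0)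
    (ϖ' ϖ'' ϖ : O)
    (hϖ' : ϖ' ∈ IsLocalRing.maximalIdeal O) (hϖ'' : ϖ'' ∈ IsLocalRing.maximalIdeal O)
    (hϖ'0 : ϖ' ≠ 0) (hϖ''0 : ϖ'' ≠ 0) (hϖ : ϖ = ϖ' * ϖ'')
    (h1 : SOnePrime (A ⧸ Ideal.span {algebraMap O A ϖ'}))
    (h2 : SOnePrime (A ⧸ Ideal.span {algebraMap O A ϖ''})) :
    SOnePrime (A ⧸ Ideal.span {algebraMap O A ϖ}) := by
  rw [sOnePrime_iff_sIdeal] at h1 h2 ⊢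
  obtain ⟨c, hc | hc⟩ := ValuationRing.cond ϖ' ϖ''
  · -- ϖ' * c = ϖ''
    have hc0 : c ≠ 0 := by
      rintro rfl; exact hϖ''0 (by rw [← hc, mul_zero])
    have := sIdeal_mul htf ϖ' c hϖ'0 hc0 (by rwa [hc])
    rwa [hϖ, ← hc]
  · -- ϖ'' * c = ϖ'
    have hc0 : c ≠ 0 := by
      rintro rfl; exact hϖ'0 (by rw [← hc, mul_zero])
    have := sIdeal_mul htf ϖ'' c hϖ''0 hc0 (by rwa [hc])
    rw [hϖ, mul_comm ϖ' ϖ'', ← hc]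
    exact this
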